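/- The space C_λ of continuous Lebesgue measure-preserving maps of I, with the uniform metric ρ, is arcwise connected: any two maps f, g ∈ C_λ are joined by a path lying entirely in C_λ. -/

import Mathlib

open Set Function Metric MeasureTheory

/-- The unit interval `[0,1]` with the Euclidean metric. -/
abbrev unitI : Type := Set.Icc (0:ℝ) 1

/-- `C_λ`: continuous surjective self-maps of `I` preserving Lebesgue measure,
i.e. `λ(f⁻¹(A)) = λ(A)` for every Borel set `A ⊆ I`. -/
def Clambda : Set C(unitI, unitI) :=
  {f | Function.Surjective ⇑f ∧ ∀ A : Set unitI, MeasurableSet A →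
    volume (((↑) '' (⇑f ⁻¹' A) : Set ℝ)) = volume (((↑) '' A : Set ℝ))}

noncomputable section
namespace CLP

abbrev e : unitI → ℝ := Subtype.val

lemma embE : MeasurableEmbedding (e) := MeasurableEmbedding.subtype_coe measurableSet_Icc

def m : Measure unitI := volume.comap e

lemma m_apply (A : Set unitI) : m A = volume (e '' A) := embE.comap_apply _ _

instance : IsProbabilityMeasure m := by
  constructor
  rw [m_apply, image_univ, Subtype.range_coe, Real.volume_Icc]
  norm_num

lemma m_ne_top (A : Set unitI) : m A ≠ ⊤ := measure_ne_top m A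

lemma m_null_of_countable {A : Set unitI} (h : A.Countable) : m A = 0 := by
  rw [m_apply]
  exact Set.Countable.measure_zero (h.image e) volume

lemma mem_Clambda_iff (f : C(unitI, unitI)) :
    f ∈ Clambda ↔ Function.Surjective ⇑f ∧ Measure.map ⇑f m = m := by
  have hfm : Measurable ⇑f := f.continuous.measurable
  constructor
  · rintro ⟨hs, hm⟩
    refine ⟨hs, ?_⟩
    ext A hA
    rw [Measure.map_apply hfm hA, m_apply, m_apply, hm A hA]
  · rintro ⟨hs, hm⟩
    refine ⟨hs, fun A hA => ?_⟩
    rw [← m_apply, ← m_apply, ← Measure.map_apply hfm hA, hm]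

/-- Level sets of a nontrivial real quadratic are finite. -/
lemma quad_levels_finite {b c k : ℝ} (h : ¬(b = 0 ∧ c = 0)) :
    {t : ℝ | c * t^2 + b * t = k}.Finite := by
  rcases eq_or_ne c 0 with hc | hc
  · subst hc
    have hb : b ≠ 0 := fun hb => h ⟨hb, rfl⟩
    have : {t : ℝ | 0 * t^2 + b * t = k} ⊆ {k / b} := by
      intro t ht
      simp only [mem_setOf_eq] at ht
      have : b * t = k := by linarith
      simp [eq_div_iff hb, mul_comm, this]
    exact (Set.finite_singleton _).subset this
  · set p := b / (2 * c) with hp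
    set d := p ^ 2 + k / c with hd
    have : {t : ℝ | c * t^2 + b * t = k} ⊆ {-p + Real.sqrt d, -p - Real.sqrt d} := by
      intro t ht
      simp only [mem_setOf_eq] at ht
      have hsq : (t + p) ^ 2 = d := by
        rw [hd, hp]
        field_simp
        linear_combination (4 * c) * ht
      have h1 : Real.sqrt d = |t + p| := by
        rw [← hsq, Real.sqrt_sq_eq_abs]
      rcases abs_cases (t + p) with ⟨h2, _⟩ | ⟨h2, _⟩
      · left; rw [h1, h2]; ring
      · right
        simp only [mem_singleton_iff]
        rw [h1, h2]; ring
    exact (Set.Finite.insert _ (Set.finite_singleton _)).subset this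


end CLP

namespace CLP

section WithF
variable (f : C(unitI, unitI))

def F : unitI → ℝ := fun x => e (f x)

def H (v : ℝ × ℝ × ℝ) (x : unitI) : ℝ := v.1 * F f x + v.2.1 * e x + v.2.2 * (e x)^2

def Good (v : ℝ × ℝ × ℝ) : Prop := ∀ c : ℝ, m {x | H f v x = c} = 0

lemma e_mem (x : unitI) : e x ∈ Set.Icc (0:ℝ) 1 := x.2

lemma F_mem (x : unitI) : F f x ∈ Set.Icc (0:ℝ) 1 := (f x).2

lemma F_cont : Continuous (F f) := continuous_subtype_val.comp f.continuous

lemma H_cont (v : ℝ × ℝ × ℝ) : Continuous (H f v) := by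
  have hF := F_cont f
  unfold H
  continuity

lemma H_joint_cont : Continuous (fun p : (ℝ × ℝ × ℝ) × unitI => H f p.1 p.2) := by
  unfold H
  have := F_cont f
  fun_prop

lemma H_smul (t : ℝ) (v : ℝ × ℝ × ℝ) (x : unitI) : H f (t • v) x = t * H f v x := by
  simp only [H, Prod.smul_fst, Prod.smul_snd, smul_eq_mul]
  ring

lemma H_sub (v w : ℝ × ℝ × ℝ) (x : unitI) : H f v x - H f w x = H f (v - w) x := by
  simp only [H, Prod.fst_sub, Prod.snd_sub]
  ring

lemma good_smul {v : ℝ × ℝ × ℝ} {t : ℝ} (ht : t ≠ 0) (hv : Good f v) : Good f (t • v) := by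
  intro c
  have : {x | H f (t • v) x = c} = {x | H f v x = c / t} := by
    ext x
    simp only [mem_setOf_eq, H_smul, eq_div_iff ht]
    constructor <;> intro h <;> linarith [h]
  rw [this]
  exact hv _

lemma good_fst_zero {v : ℝ × ℝ × ℝ} (h1 : v.1 = 0) (h : v ≠ 0) : Good f v := by
  intro c
  have hbc : ¬(v.2.1 = 0 ∧ v.2.2 = 0) := by
    rintro ⟨h2, h3⟩
    exact h (Prod.ext h1 (Prod.ext h2 h3))
  apply m_null_of_countable
  have hsub : {x : unitI | H f v x = c} ⊆ e ⁻¹' {t : ℝ | v.2.2 * t^2 + v.2.1 * t = c} := by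
    intro x hx
    simp only [mem_setOf_eq, H, h1, zero_mul, zero_add, mem_preimage] at hx ⊢
    linarith [hx]
  refine Set.Countable.mono hsub ?_
  have hfin := quad_levels_finite (b := v.2.1) (c := v.2.2) (k := c) hbc
  exact Set.Countable.preimage hfin.countable Subtype.coe_injective

lemma good_e₂ : Good f ((0:ℝ), (1:ℝ), (0:ℝ)) := by
  apply good_fst_zero f rfl
  intro h
  have := congrArg (fun v : ℝ × ℝ × ℝ => v.2.1) h
  norm_num at this

lemma map_m_eq (hf : f ∈ Clambda) : Measure.map ⇑f m = m :=
  ((mem_Clambda_iff f).mp hf).2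

lemma preimage_m (hf : f ∈ Clambda) {S : Set unitI} (hS : MeasurableSet S) :
    m (⇑f ⁻¹' S) = m S := by
  rw [← Measure.map_apply f.continuous.measurable hS, map_m_eq f hf]

lemma m_singleton (x : unitI) : m {x} = 0 := by
  rw [m_apply]
  exact Set.Countable.measure_zero ((Set.countable_singleton x).image e) volume

lemma good_e₁ (hf : f ∈ Clambda) : Good f ((1:ℝ), (0:ℝ), (0:ℝ)) := by
  intro c
  have hH : ∀ x, H f (1,0,0) x = F f x := by
    intro x; simp [H]
  by_cases hc : c ∈ Set.Icc (0:ℝ) 1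
  · have : {x | H f (1,0,0) x = c} = ⇑f ⁻¹' {(⟨c, hc⟩ : unitI)} := by
      ext x
      simp only [mem_setOf_eq, hH, mem_preimage, mem_singleton_iff, F]
      exact ⟨fun h => Subtype.ext h, fun h => congrArg Subtype.val h⟩
    rw [this, preimage_m f hf (measurableSet_singleton _), m_singleton]
  · have : {x | H f (1,0,0) x = c} = ∅ := by
      ext x
      simp only [mem_setOf_eq, hH, mem_empty_iff_false, iff_false]
      intro h
      exact hc (h ▸ F_mem f x)
    rw [this, measure_empty]


def Bad1 : Set (ℝ × ℝ × ℝ) := {v | v.1 = 1 ∧ ¬ Good f v}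

lemma levelset_measurable (v : ℝ × ℝ × ℝ) (c : ℝ) :
    MeasurableSet {x : unitI | H f v x = c} :=
  (H_cont f v).measurable (measurableSet_singleton c)

lemma countable_Bad1 : (Bad1 f).Countable := by
  classical
  by_cases hne : (Bad1 f).Nonempty
  · -- choose witnesses
    have hch : ∀ i : ↥(Bad1 f), ∃ c : ℝ, m {x | H f i.1 x = c} ≠ 0 := by
      rintro ⟨v, hv⟩
      have := hv.2
      unfold Good at this
      push_neg at this
      exact this
    choose cw hcw using hch
    set As : ↥(Bad1 f) → Set unitI := fun i => {x | H f i.1 x = cw i} with hAs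
    have hmble : ∀ i, NullMeasurableSet (As i) m :=
      fun i => (levelset_measurable f i.1 (cw i)).nullMeasurableSet
    have hdisj : Pairwise (MeasureTheory.AEDisjoint m on As) := by
      intro i j hij
      have hvne : i.1 - j.1 ≠ 0 := by
        intro h
        apply hij
        exact Subtype.ext (by rwa [sub_eq_zero] at h)
      have hfst : (i.1 - j.1).1 = 0 := by
        have h1 : i.1.1 = 1 := i.2.1
        have h2 : j.1.1 = 1 := j.2.1
        simp [Prod.fst_sub, h1, h2]
      have hgood := good_fst_zero f hfst hvne
      refine measure_mono_null ?_ (hgood (cw i - cw j))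
      intro x hx
      simp only [mem_inter_iff, hAs, mem_setOf_eq] at hx
      simp only [mem_setOf_eq, ← H_sub, hx.1, hx.2]
    have hcnt := MeasureTheory.Measure.countable_meas_pos_of_disjoint_iUnion₀
      (μ := m) hmble hdisj
    have huniv : {i : ↥(Bad1 f) | 0 < m (As i)} = Set.univ := by
      ext i
      simp only [mem_setOf_eq, mem_univ, iff_true]
      exact (hcw i).bot_lt
    rw [huniv] at hcnt
    have : Countable ↥(Bad1 f) := Set.countable_univ_iff.mp hcnt
    exact Set.countable_coe_iff.mp this
  · rw [Set.not_nonempty_iff_eq_empty] at hne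
    rw [hne]
    exact Set.countable_empty

/-- The countable set of "bad" parameters `s`. -/
def BadS (hf : f ∈ Clambda) : Set ℝ :=
  {0} ∪ ⋃ v ∈ Bad1 f, ({s : ℝ | v.2.1 * s^2 + (-(v.2.2)) * s = 0} ∪ {s : ℝ | 1 * s^2 + 0 * s = v.2.2})

lemma bad1_snd_ne (hf : f ∈ Clambda) {v : ℝ × ℝ × ℝ} (hv : v ∈ Bad1 f) :
    ¬(-(v.2.2) = 0 ∧ v.2.1 = 0) := by
  rintro ⟨h3, h2⟩
  have h3' : v.2.2 = 0 := by linarith [h3]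
  have : v = ((1:ℝ), (0:ℝ), (0:ℝ)) := Prod.ext hv.1 (Prod.ext h2 h3')
  exact hv.2 (this ▸ good_e₁ f hf)

lemma countable_BadS (hf : f ∈ Clambda) : (BadS f hf).Countable := by
  apply Set.Countable.union (Set.countable_singleton 0)
  apply Set.Countable.biUnion (countable_Bad1 f)
  intro v hv
  apply Set.Countable.union
  · exact (quad_levels_finite (bad1_snd_ne f hf hv)).countable
  · exact (quad_levels_finite (k := v.2.2) (b := (0:ℝ)) (c := (1:ℝ))
      (by rintro ⟨_, h⟩; norm_num at h)).countable

lemma exists_good_s (hf : f ∈ Clambda) : ∃ s : ℝ, s ∉ BadS f hf := by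
  by_contra h
  push_neg at h
  have : (Set.univ : Set ℝ).Countable := by
    refine Set.Countable.mono (fun x _ => h x) (countable_BadS f hf)
  exact Cardinal.not_countable_real this

lemma badS_spec (hf : f ∈ Clambda) {s : ℝ} (hs : s ∉ BadS f hf) :
    s ≠ 0 ∧ ∀ v ∈ Bad1 f, (v.2.1 * s^2 + (-(v.2.2)) * s ≠ 0 ∧ 1 * s^2 + 0 * s ≠ v.2.2) := by
  unfold BadS at hs
  simp only [Set.mem_union, Set.mem_singleton_iff, Set.mem_iUnion, not_or, not_exists] at hs
  refine ⟨hs.1, fun v hv => ?_⟩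
  have h2 := hs.2 v
  simp only [Set.mem_union, mem_setOf_eq, not_or] at h2
  exact h2 hv

lemma seg1_good (hf : f ∈ Clambda) {s : ℝ} (hs : s ∉ BadS f hf) (u : ℝ) :
    Good f ((1-u) • ((1:ℝ),(0:ℝ),(0:ℝ)) + u • ((1:ℝ), s, s^2)) := by
  have hp : (1-u) • ((1:ℝ),(0:ℝ),(0:ℝ)) + u • ((1:ℝ), s, s^2)
      = ((1:ℝ), u*s, u*s^2) := by
    simp only [Prod.smul_mk, smul_eq_mul, Prod.mk_add_mk]
    norm_num
  rw [hp]
  by_contra hbad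
  have hmem : ((1:ℝ), u*s, u*s^2) ∈ Bad1 f := ⟨rfl, hbad⟩
  have hne := ((badS_spec f hf hs).2 _ hmem).1
  apply hne
  ring

lemma seg2_good (hf : f ∈ Clambda) {s : ℝ} (hs : s ∉ BadS f hf) (u : ℝ) :
    Good f ((1-u) • ((1:ℝ), s, s^2) + u • ((0:ℝ),(1:ℝ),(0:ℝ))) := by
  have hp : (1-u) • ((1:ℝ), s, s^2) + u • ((0:ℝ),(1:ℝ),(0:ℝ))
      = ((1-u), (1-u)*s + u, (1-u)*s^2) := by
    simp only [Prod.smul_mk, smul_eq_mul, Prod.mk_add_mk]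
    norm_num
  rw [hp]
  rcases eq_or_ne u 1 with hu | hu
  · subst hu
    norm_num
    exact good_e₂ f
  · have h1u : (1:ℝ) - u ≠ 0 := sub_ne_zero.mpr (Ne.symm hu)
    have hgv : Good f ((1-u)⁻¹ • (((1-u), (1-u)*s + u, (1-u)*s^2) : ℝ × ℝ × ℝ)) := by
      by_contra hbad
      have hfst : ((1-u)⁻¹ • (((1-u), (1-u)*s + u, (1-u)*s^2) : ℝ × ℝ × ℝ)).1 = 1 := by
        simp only [Prod.smul_fst, smul_eq_mul]
        field_simp
      have hmem : (1-u)⁻¹ • (((1-u), (1-u)*s + u, (1-u)*s^2) : ℝ × ℝ × ℝ) ∈ Bad1 f :=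
        ⟨hfst, hbad⟩
      have hne := ((badS_spec f hf hs).2 _ hmem).2
      apply hne
      simp only [Prod.smul_snd, smul_eq_mul]
      field_simp
      ring
    have := good_smul f h1u hgv
    rwa [smul_inv_smul₀ h1u] at this

/-- The CDF of the pushforward of `m` under `H f v`. -/
def Cv (v : ℝ × ℝ × ℝ) : ℝ → ℝ := fun z => (m {x | H f v x ≤ z}).toReal

lemma levelLe_measurable (v : ℝ × ℝ × ℝ) (z : ℝ) :
    MeasurableSet {x : unitI | H f v x ≤ z} :=
  measurableSet_le (H_cont f v).measurable measurable_const

lemma Cv_mono (v : ℝ × ℝ × ℝ) : Monotone (Cv f v) := by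
  intro z z' hz
  apply ENNReal.toReal_mono (m_ne_top _)
  exact measure_mono (fun x hx => le_trans hx hz)

lemma Cv_nonneg (v : ℝ × ℝ × ℝ) (z : ℝ) : 0 ≤ Cv f v z := ENNReal.toReal_nonneg

lemma Cv_le_one (v : ℝ × ℝ × ℝ) (z : ℝ) : Cv f v z ≤ 1 := by
  have h := prob_le_one (μ := m) (s := {x | H f v x ≤ z})
  calc Cv f v z ≤ (1 : ENNReal).toReal := ENNReal.toReal_mono (by norm_num) h
    _ = 1 := by norm_num

lemma Cv_tendsto_right (v : ℝ × ℝ × ℝ) (z₀ : ℝ) :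
    Filter.Tendsto (fun n : ℕ => Cv f v (z₀ + 1/(n+1))) Filter.atTop (nhds (Cv f v z₀)) := by
  have hset : ⋂ n : ℕ, {x : unitI | H f v x ≤ z₀ + 1/(n+1)} = {x | H f v x ≤ z₀} := by
    ext x
    simp only [Set.mem_iInter, mem_setOf_eq]
    constructor
    · intro h
      by_contra hlt
      push_neg at hlt
      obtain ⟨n, hn⟩ := exists_nat_one_div_lt (sub_pos.mpr hlt)
      linarith [h n, hn]
    · intro h n
      have : (0:ℝ) < 1/(n+1) := by positivity
      linarith
  have hmeas := tendsto_measure_iInter_atTop (μ := m)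
    (s := fun n : ℕ => {x : unitI | H f v x ≤ z₀ + 1/(n+1)})
    (fun n => (levelLe_measurable f v _).nullMeasurableSet)
    (fun a b hab => by
      intro x hx
      simp only [mem_setOf_eq] at hx ⊢
      have : (1:ℝ)/(b+1) ≤ 1/(a+1) := by
        apply one_div_le_one_div_of_le (by positivity)
        exact_mod_cast by omega
      linarith)
    ⟨0, m_ne_top _⟩
  rw [hset] at hmeas
  exact (ENNReal.tendsto_toReal (m_ne_top _)).comp hmeas

lemma Cv_tendsto_left {v : ℝ × ℝ × ℝ} (hv : Good f v) (z₀ : ℝ) :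
    Filter.Tendsto (fun n : ℕ => Cv f v (z₀ - 1/(n+1))) Filter.atTop (nhds (Cv f v z₀)) := by
  have hset : ⋃ n : ℕ, {x : unitI | H f v x ≤ z₀ - 1/(n+1)} = {x | H f v x < z₀} := by
    ext x
    simp only [Set.mem_iUnion, mem_setOf_eq]
    constructor
    · rintro ⟨n, hn⟩
      have : (0:ℝ) < 1/(n+1) := by positivity
      linarith
    · intro h
      obtain ⟨n, hn⟩ := exists_nat_one_div_lt (sub_pos.mpr h)
      exact ⟨n, by linarith⟩
  have hlt_eq : m {x : unitI | H f v x < z₀} = m {x | H f v x ≤ z₀} := by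
    apply le_antisymm
    · exact measure_mono (fun x hx => le_of_lt (show H f v x < z₀ from hx))
    · have hsplit : {x : unitI | H f v x ≤ z₀}
          ⊆ {x | H f v x < z₀} ∪ {x | H f v x = z₀} := by
        intro x hx
        simp only [mem_setOf_eq, Set.mem_union] at hx ⊢
        rcases lt_or_eq_of_le hx with h | h
        · exact Or.inl h
        · exact Or.inr h
      calc m {x | H f v x ≤ z₀} ≤ m ({x | H f v x < z₀} ∪ {x | H f v x = z₀}) :=
            measure_mono hsplit
        _ ≤ m {x | H f v x < z₀} + m {x | H f v x = z₀} := measure_union_le _ _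
        _ = m {x | H f v x < z₀} := by rw [hv z₀, add_zero]
  have hmeas := tendsto_measure_iUnion_atTop (μ := m)
    (s := fun n : ℕ => {x : unitI | H f v x ≤ z₀ - 1/(n+1)})
    (fun a b hab => by
      intro x hx
      simp only [mem_setOf_eq] at hx ⊢
      have : (1:ℝ)/(b+1) ≤ 1/(a+1) := by
        apply one_div_le_one_div_of_le (by positivity)
        exact_mod_cast by omega
      linarith)
  rw [hset, hlt_eq] at hmeas
  exact (ENNReal.tendsto_toReal (m_ne_top _)).comp hmeas

lemma Cv_cont {v : ℝ × ℝ × ℝ} (hv : Good f v) : Continuous (Cv f v) := by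
  rw [continuous_iff_continuousAt]
  intro z₀
  rw [Metric.continuousAt_iff]
  intro ε hε
  have hr := (Cv_tendsto_right f v z₀).eventually
    (eventually_abs_sub_lt (Cv f v z₀) hε)
  have hl := (Cv_tendsto_left f hv z₀).eventually
    (eventually_abs_sub_lt (Cv f v z₀) hε)
  obtain ⟨n, hn⟩ := (hr.and hl).exists
  refine ⟨1/(n+1), by positivity, fun {z} hz => ?_⟩
  rw [Real.dist_eq] at hz ⊢
  rw [abs_sub_lt_iff] at hz ⊢
  constructor
  · calc Cv f v z - Cv f v z₀ ≤ Cv f v (z₀ + 1/(n+1)) - Cv f v z₀ := by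
          have := Cv_mono f v (le_of_lt (by linarith [hz.1] : z < z₀ + 1/(n+1)))
          linarith
      _ < ε := by
          have := hn.1
          rw [abs_sub_lt_iff] at this
          exact this.1
  · calc Cv f v z₀ - Cv f v z ≤ Cv f v z₀ - Cv f v (z₀ - 1/(n+1)) := by
          have := Cv_mono f v (le_of_lt (by linarith [hz.2] : z₀ - 1/(n+1) < z))
          linarith
      _ < ε := by
          have := hn.2
          rw [abs_sub_lt_iff] at this
          exact this.2

lemma exists_min (v : ℝ × ℝ × ℝ) : ∃ x₀ : unitI, ∀ x, H f v x₀ ≤ H f v x := by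
  obtain ⟨x₀, -, hx₀⟩ := IsCompact.exists_isMinOn (isCompact_univ : IsCompact (Set.univ : Set unitI))
    (Set.univ_nonempty) (H_cont f v).continuousOn
  exact ⟨x₀, fun x => hx₀ (Set.mem_univ x)⟩

lemma exists_max (v : ℝ × ℝ × ℝ) : ∃ x₁ : unitI, ∀ x, H f v x ≤ H f v x₁ := by
  obtain ⟨x₁, -, hx₁⟩ := IsCompact.exists_isMaxOn (isCompact_univ : IsCompact (Set.univ : Set unitI))
    (Set.univ_nonempty) (H_cont f v).continuousOn
  exact ⟨x₁, fun x => hx₁ (Set.mem_univ x)⟩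

lemma Cv_min_eq_zero {v : ℝ × ℝ × ℝ} (hv : Good f v) {x₀ : unitI}
    (hx₀ : ∀ x, H f v x₀ ≤ H f v x) : Cv f v (H f v x₀) = 0 := by
  have hset : {x : unitI | H f v x ≤ H f v x₀} = {x | H f v x = H f v x₀} := by
    ext x
    simp only [mem_setOf_eq]
    exact ⟨fun h => le_antisymm h (hx₀ x), fun h => le_of_eq h⟩
  unfold Cv
  rw [hset, hv (H f v x₀)]
  norm_num

lemma Cv_max_eq_one {v : ℝ × ℝ × ℝ} {x₁ : unitI}
    (hx₁ : ∀ x, H f v x ≤ H f v x₁) : Cv f v (H f v x₁) = 1 := by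
  have hset : {x : unitI | H f v x ≤ H f v x₁} = Set.univ := by
    ext x
    simp only [mem_setOf_eq, Set.mem_univ, iff_true]
    exact hx₁ x
  unfold Cv
  rw [hset]
  simp

/-- Key lemma: the level-`≤ y` set of the normalized map has measure exactly `y`,
for `y ∈ [0,1)`. -/
lemma m_CH_le {v : ℝ × ℝ × ℝ} (hv : Good f v) {y : ℝ} (hy0 : 0 ≤ y) (hy1 : y < 1) :
    m {x : unitI | Cv f v (H f v x) ≤ y} = ENNReal.ofReal y := by
  set A : Set ℝ := {z : ℝ | Cv f v z ≤ y} with hA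
  have hclosed : IsClosed A := IsClosed.preimage (Cv_cont f hv) isClosed_Iic
  obtain ⟨x₀, hx₀⟩ := exists_min f v
  obtain ⟨x₁, hx₁⟩ := exists_max f v
  have hne : A.Nonempty := ⟨H f v x₀, by
    simp only [hA, mem_setOf_eq, Cv_min_eq_zero f hv hx₀]
    exact hy0⟩
  have hbdd : BddAbove A := by
    refine ⟨H f v x₁, fun z hz => ?_⟩
    by_contra hzgt
    push_neg at hzgt
    have h1 : Cv f v z = 1 := by
      have : {x : unitI | H f v x ≤ z} = Set.univ := by
        ext x
        simp only [mem_setOf_eq, Set.mem_univ, iff_true]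
        exact le_of_lt (lt_of_le_of_lt (hx₁ x) hzgt)
      unfold Cv
      rw [this]
      simp
    simp only [hA, mem_setOf_eq, h1] at hz
    linarith
  set T := sSup A with hT
  have hTA : T ∈ A := IsClosed.csSup_mem hclosed hne hbdd
  have hCT_le : Cv f v T ≤ y := hTA
  have hCT_ge : y ≤ Cv f v T := by
    by_contra hlt
    push_neg at hlt
    have hcont : ContinuousAt (Cv f v) T := (Cv_cont f hv).continuousAt
    have hev : ∀ᶠ z in nhds T, Cv f v z < y :=
      hcont.eventually_lt continuousAt_const hlt
    obtain ⟨z, hzT, hz⟩ := hev.exists_gt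
    have : z ≤ T := le_csSup hbdd (le_of_lt hz)
    linarith
  have hCT : Cv f v T = y := le_antisymm hCT_le hCT_ge
  have hseteq : {x : unitI | Cv f v (H f v x) ≤ y} = {x | H f v x ≤ T} := by
    ext x
    simp only [mem_setOf_eq]
    constructor
    · intro h
      exact le_csSup hbdd h
    · intro h
      calc Cv f v (H f v x) ≤ Cv f v T := Cv_mono f v h
        _ = y := hCT
  rw [hseteq]
  have : (m {x : unitI | H f v x ≤ T}).toReal = y := hCT
  rw [← this, ENNReal.ofReal_toReal (m_ne_top _)]

/-- The normalized map `N_v = cdf ∘ H_v` as a continuous self-map of the interval. -/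
def Nmap {v : ℝ × ℝ × ℝ} (hv : Good f v) : C(unitI, unitI) :=
  ⟨fun x => ⟨Cv f v (H f v x), ⟨Cv_nonneg f v _, Cv_le_one f v _⟩⟩,
    Continuous.subtype_mk ((Cv_cont f hv).comp (H_cont f v)) _⟩

lemma Nmap_surj {v : ℝ × ℝ × ℝ} (hv : Good f v) : Function.Surjective ⇑(Nmap f hv) := by
  intro b
  obtain ⟨x₀, hx₀⟩ := exists_min f v
  obtain ⟨x₁, hx₁⟩ := exists_max f v
  set g : unitI → ℝ := fun x => Cv f v (H f v x) with hg
  have hgc : Continuous g := (Cv_cont f hv).comp (H_cont f v)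
  have hmem : (b : ℝ) ∈ Set.Icc (g x₀) (g x₁) := by
    rw [hg]
    simp only
    rw [Cv_min_eq_zero f hv hx₀, Cv_max_eq_one f hx₁]
    exact b.2
  obtain ⟨x, hx⟩ := intermediate_value_univ x₀ x₁ hgc hmem
  exact ⟨x, Subtype.ext hx⟩

lemma Nmap_measure_preserving {v : ℝ × ℝ × ℝ} (hv : Good f v) :
    Measure.map ⇑(Nmap f hv) m = m := by
  have hgc : Continuous (fun x => Cv f v (H f v x)) := (Cv_cont f hv).comp (H_cont f v)
  have hNc : Continuous ⇑(Nmap f hv) := (Nmap f hv).continuous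
  have hcomp : e ∘ ⇑(Nmap f hv) = fun x => Cv f v (H f v x) := rfl
  have key : Measure.map (e ∘ ⇑(Nmap f hv)) m = volume.restrict (Set.Icc (0:ℝ) 1) := by
    rw [hcomp]
    have : IsProbabilityMeasure (Measure.map (fun x => Cv f v (H f v x)) m) :=
      Measure.isProbabilityMeasure_map hgc.measurable.aemeasurable
    apply Measure.ext_of_Iic
    intro a
    rw [Measure.map_apply hgc.measurable measurableSet_Iic,
      Measure.restrict_apply measurableSet_Iic]
    rcases lt_or_ge a 0 with ha | ha
    · have h1 : (fun x => Cv f v (H f v x)) ⁻¹' (Set.Iic a) = ∅ := by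
        ext x
        simp only [Set.mem_preimage, Set.mem_Iic, Set.mem_empty_iff_false, iff_false, not_le]
        exact lt_of_lt_of_le ha (Cv_nonneg f v _)
      have h2 : Set.Iic a ∩ Set.Icc (0:ℝ) 1 = ∅ := by
        ext t
        simp only [Set.mem_inter_iff, Set.mem_Iic, Set.mem_Icc, Set.mem_empty_iff_false,
          iff_false, not_and, and_imp]
        intro h h0 _
        linarith
      rw [h1, h2, measure_empty, measure_empty]
    rcases lt_or_ge a 1 with ha1 | ha1
    · have h1 : (fun x => Cv f v (H f v x)) ⁻¹' (Set.Iic a)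
          = {x : unitI | Cv f v (H f v x) ≤ a} := rfl
      rw [h1, m_CH_le f hv ha ha1]
      have h2 : Set.Iic a ∩ Set.Icc (0:ℝ) 1 = Set.Icc 0 a := by
        ext t
        simp only [Set.mem_inter_iff, Set.mem_Iic, Set.mem_Icc]
        constructor
        · rintro ⟨h, h0, _⟩; exact ⟨h0, h⟩
        · rintro ⟨h0, h⟩; exact ⟨h, h0, by linarith⟩
      rw [h2, Real.volume_Icc]
      congr 1
      linarith
    · have h1 : (fun x => Cv f v (H f v x)) ⁻¹' (Set.Iic a) = Set.univ := by
        ext x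
        simp only [Set.mem_preimage, Set.mem_Iic, Set.mem_univ, iff_true]
        exact le_trans (Cv_le_one f v _) ha1
      have h2 : Set.Iic a ∩ Set.Icc (0:ℝ) 1 = Set.Icc 0 1 := by
        ext t
        simp only [Set.mem_inter_iff, Set.mem_Iic, Set.mem_Icc]
        constructor
        · rintro ⟨h, h0, h1'⟩; exact ⟨h0, h1'⟩
        · rintro ⟨h0, h1'⟩; exact ⟨by linarith, h0, h1'⟩
      rw [h1, h2, measure_univ, Real.volume_Icc]
      norm_num
  have hmapE : Measure.map e m = volume.restrict (Set.Icc (0:ℝ) 1) := by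
    have := embE.map_comap (volume : Measure ℝ)
    rw [Subtype.range_coe] at this
    exact this
  have hEN : Measure.map e (Measure.map ⇑(Nmap f hv) m) = Measure.map e m := by
    rw [Measure.map_map embE.measurable hNc.measurable, key, hmapE]
  calc Measure.map ⇑(Nmap f hv) m
      = Measure.comap e (Measure.map e (Measure.map ⇑(Nmap f hv) m)) := by
        rw [embE.comap_map]
    _ = Measure.comap e (Measure.map e m) := by rw [hEN]
    _ = m := embE.comap_map m

lemma Nmap_mem_Clambda {v : ℝ × ℝ × ℝ} (hv : Good f v) : Nmap f hv ∈ Clambda :=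
  (mem_Clambda_iff _).mpr ⟨Nmap_surj f hv, Nmap_measure_preserving f hv⟩

lemma H_e₁ (x : unitI) : H f ((1:ℝ),(0:ℝ),(0:ℝ)) x = F f x := by simp [H]

lemma H_e₂ (x : unitI) : H f ((0:ℝ),(1:ℝ),(0:ℝ)) x = e x := by simp [H]

lemma m_coe_le {y : ℝ} (hy : y ∈ Set.Icc (0:ℝ) 1) :
    m {z : unitI | e z ≤ y} = ENNReal.ofReal y := by
  rw [m_apply]
  have himg : e '' {z : unitI | e z ≤ y} = Set.Icc 0 y := by
    ext t
    simp only [Set.mem_image, mem_setOf_eq, Set.mem_Icc]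
    constructor
    · rintro ⟨z, hz, rfl⟩
      exact ⟨z.2.1, hz⟩
    · rintro ⟨h0, h1⟩
      exact ⟨⟨t, ⟨h0, le_trans h1 hy.2⟩⟩, h1, rfl⟩
  rw [himg, Real.volume_Icc, sub_zero]

lemma coe_le_measurable (y : ℝ) : MeasurableSet {z : unitI | e z ≤ y} :=
  measurableSet_le measurable_subtype_coe measurable_const

lemma Nmap_e₁ (hf : f ∈ Clambda) (h : Good f ((1:ℝ),(0:ℝ),(0:ℝ))) : Nmap f h = f := by
  ext x
  show Cv f _ (H f _ x) = ((f x : unitI) : ℝ)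
  rw [H_e₁]
  have hFx : F f x ∈ Set.Icc (0:ℝ) 1 := F_mem f x
  have hset : {x' : unitI | H f ((1:ℝ),(0:ℝ),(0:ℝ)) x' ≤ F f x}
      = ⇑f ⁻¹' {z : unitI | e z ≤ F f x} := by
    ext x'
    simp only [mem_setOf_eq, Set.mem_preimage, H_e₁]
    rfl
  unfold Cv
  rw [hset, preimage_m f hf (coe_le_measurable _), m_coe_le hFx,
    ENNReal.toReal_ofReal hFx.1]
  rfl

lemma Nmap_e₂ (h : Good f ((0:ℝ),(1:ℝ),(0:ℝ))) : Nmap f h = ContinuousMap.id unitI := by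
  ext x
  show Cv f _ (H f _ x) = (x : ℝ)
  rw [H_e₂]
  have hx : e x ∈ Set.Icc (0:ℝ) 1 := x.2
  have hset : {x' : unitI | H f ((0:ℝ),(1:ℝ),(0:ℝ)) x' ≤ e x}
      = {z : unitI | e z ≤ e x} := by
    ext x'
    simp only [mem_setOf_eq, H_e₂]
  unfold Cv
  rw [hset, m_coe_le hx, ENNReal.toReal_ofReal hx.1]

/-- distance-like quantity on parameter space -/
def dd (v w : ℝ × ℝ × ℝ) : ℝ := |v.1 - w.1| + |v.2.1 - w.2.1| + |v.2.2 - w.2.2|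

lemma H_dist (v w : ℝ × ℝ × ℝ) (x : unitI) : |H f v x - H f w x| ≤ dd v w := by
  have hF := F_mem f x
  have hx := e_mem x
  have h1 : H f v x - H f w x
      = (v.1 - w.1) * F f x + (v.2.1 - w.2.1) * e x + (v.2.2 - w.2.2) * (e x)^2 := by
    simp only [H]; ring
  rw [h1]
  unfold dd
  have b1 : |(v.1 - w.1) * F f x| ≤ |v.1 - w.1| := by
    rw [abs_mul]
    calc |v.1 - w.1| * |F f x| ≤ |v.1 - w.1| * 1 := by
          apply mul_le_mul_of_nonneg_left _ (abs_nonneg _)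
          rw [abs_le]; constructor <;> linarith [hF.1, hF.2]
      _ = |v.1 - w.1| := mul_one _
  have b2 : |(v.2.1 - w.2.1) * e x| ≤ |v.2.1 - w.2.1| := by
    rw [abs_mul]
    calc |v.2.1 - w.2.1| * |e x| ≤ |v.2.1 - w.2.1| * 1 := by
          apply mul_le_mul_of_nonneg_left _ (abs_nonneg _)
          rw [abs_le]; constructor <;> linarith [hx.1, hx.2]
      _ = |v.2.1 - w.2.1| := mul_one _
  have b3 : |(v.2.2 - w.2.2) * (e x)^2| ≤ |v.2.2 - w.2.2| := by
    rw [abs_mul]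
    calc |v.2.2 - w.2.2| * |(e x)^2| ≤ |v.2.2 - w.2.2| * 1 := by
          apply mul_le_mul_of_nonneg_left _ (abs_nonneg _)
          rw [abs_le]; constructor <;> nlinarith [hx.1, hx.2]
      _ = |v.2.2 - w.2.2| := mul_one _
  calc |(v.1 - w.1) * F f x + (v.2.1 - w.2.1) * e x + (v.2.2 - w.2.2) * (e x)^2|
      ≤ |(v.1 - w.1) * F f x + (v.2.1 - w.2.1) * e x| + |(v.2.2 - w.2.2) * (e x)^2| :=
        abs_add_le _ _
    _ ≤ |(v.1 - w.1) * F f x| + |(v.2.1 - w.2.1) * e x| + |(v.2.2 - w.2.2) * (e x)^2| := by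
        linarith [abs_add_le ((v.1 - w.1) * F f x) ((v.2.1 - w.2.1) * e x)]
    _ ≤ |v.1 - w.1| + |v.2.1 - w.2.1| + |v.2.2 - w.2.2| := by linarith

lemma Cv_compare (v w : ℝ × ℝ × ℝ) (z : ℝ) :
    Cv f v z ≤ Cv f w (z + dd v w) := by
  apply ENNReal.toReal_mono (m_ne_top _)
  apply measure_mono
  intro x hx
  simp only [mem_setOf_eq] at hx ⊢
  have := H_dist f w v x
  rw [abs_le] at this
  have hdd : dd w v = dd v w := by unfold dd; rw [abs_sub_comm, abs_sub_comm w.2.1,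
    abs_sub_comm w.2.2]
  linarith [this.2, hdd ▸ this.2]

lemma joint_cont {vc : unitI → ℝ × ℝ × ℝ} (hvc : Continuous vc)
    (hg : ∀ u, Good f (vc u)) :
    Continuous (fun p : unitI × unitI => Cv f (vc p.1) (H f (vc p.1) p.2)) := by
  rw [continuous_iff_continuousAt]
  rintro ⟨u₀, x₀⟩
  set v₀ := vc u₀ with hv₀
  set y₀ := H f v₀ x₀ with hy₀
  set ψ : unitI × unitI → ℝ :=
    fun p => dd (vc p.1) v₀ + |H f (vc p.1) p.2 - y₀| with hψ
  have hψ_cont : Continuous ψ := by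
    apply Continuous.add
    · unfold dd
      fun_prop
    · apply Continuous.abs
      apply Continuous.sub _ continuous_const
      have hHj := H_joint_cont f
      exact hHj.comp (Continuous.prodMk (hvc.comp continuous_fst) continuous_snd)
  have hψ₀ : ψ (u₀, x₀) = 0 := by
    simp [hψ, dd, hy₀, hv₀]
  have hub : ∀ p : unitI × unitI,
      Cv f (vc p.1) (H f (vc p.1) p.2) ≤ Cv f v₀ (y₀ + ψ p) := by
    rintro ⟨u, x⟩
    calc Cv f (vc u) (H f (vc u) x)
        ≤ Cv f v₀ (H f (vc u) x + dd (vc u) v₀) := Cv_compare f (vc u) v₀ _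
      _ ≤ Cv f v₀ (y₀ + ψ (u, x)) := by
          apply Cv_mono
          have := abs_nonneg (H f (vc u) x - y₀)
          have h2 := le_abs_self (H f (vc u) x - y₀)
          simp only [hψ]
          linarith
  have hlb : ∀ p : unitI × unitI,
      Cv f v₀ (y₀ - ψ p) ≤ Cv f (vc p.1) (H f (vc p.1) p.2) := by
    rintro ⟨u, x⟩
    have h1 : Cv f v₀ (y₀ - ψ (u, x)) ≤ Cv f (vc u) (y₀ - ψ (u,x) + dd v₀ (vc u)) :=
      Cv_compare f v₀ (vc u) _
    calc Cv f v₀ (y₀ - ψ (u, x))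
        ≤ Cv f (vc u) (y₀ - ψ (u,x) + dd v₀ (vc u)) := h1
      _ ≤ Cv f (vc u) (H f (vc u) x) := by
          apply Cv_mono
          have h2 := le_abs_self (y₀ - H f (vc u) x)
          rw [abs_sub_comm] at h2
          have hdd : dd v₀ (vc u) = dd (vc u) v₀ := by
            unfold dd; rw [abs_sub_comm, abs_sub_comm v₀.2.1, abs_sub_comm v₀.2.2]
          simp only [hψ]
          linarith
  have hC₀ : ContinuousAt (Cv f v₀) y₀ := (Cv_cont f (hg u₀)).continuousAt
  have hψ_tendsto : Filter.Tendsto ψ (nhds (u₀, x₀)) (nhds 0) := by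
    have := hψ_cont.continuousAt (x := (u₀, x₀))
    rwa [ContinuousAt, hψ₀] at this
  have hup : Filter.Tendsto (fun p => Cv f v₀ (y₀ + ψ p)) (nhds (u₀, x₀))
      (nhds (Cv f v₀ y₀)) := by
    have h1 : Filter.Tendsto (fun p => y₀ + ψ p) (nhds (u₀, x₀)) (nhds y₀) := by
      have := Filter.Tendsto.const_add y₀ hψ_tendsto
      simpa using this
    exact Filter.Tendsto.comp (g := Cv f v₀) hC₀ h1
  have hdown : Filter.Tendsto (fun p => Cv f v₀ (y₀ - ψ p)) (nhds (u₀, x₀))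
      (nhds (Cv f v₀ y₀)) := by
    have h1 : Filter.Tendsto (fun p => y₀ - ψ p) (nhds (u₀, x₀)) (nhds y₀) := by
      have := Filter.Tendsto.const_sub y₀ hψ_tendsto
      simpa using this
    exact Filter.Tendsto.comp (g := Cv f v₀) hC₀ h1
  exact tendsto_of_tendsto_of_tendsto_of_le_of_le hdown hup hlb hub


lemma Nmap_congr {v v' : ℝ × ℝ × ℝ} (hvv : v = v') (hv : Good f v) (hv' : Good f v') :
    Nmap f hv = Nmap f hv' := by
  subst hvv
  rfl

/-- A good segment in parameter space yields a `JoinedIn Clambda` between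
the normalized maps at its endpoints. -/
lemma joined_seg {a b : ℝ × ℝ × ℝ}
    (hseg : ∀ u : ℝ, Good f ((1-u) • a + u • b))
    (ha : Good f a) (hb : Good f b) :
    JoinedIn Clambda (Nmap f ha) (Nmap f hb) := by
  set vc : unitI → ℝ × ℝ × ℝ := fun u => (1 - e u) • a + (e u) • b with hvc
  have hvc_cont : Continuous vc := by
    apply Continuous.add
    · exact (continuous_const.sub continuous_subtype_val).smul continuous_const
    · exact continuous_subtype_val.smul continuous_const
  have hgood : ∀ u : unitI, Good f (vc u) := fun u => hseg (e u)
  have hjc := joint_cont f hvc_cont hgood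
  set Φ : unitI × unitI → unitI :=
    fun p => ⟨Cv f (vc p.1) (H f (vc p.1) p.2), ⟨Cv_nonneg f _ _, Cv_le_one f _ _⟩⟩ with hΦ
  have hΦc : Continuous Φ := Continuous.subtype_mk hjc _
  set K := ContinuousMap.curry ⟨Φ, hΦc⟩ with hK
  have hKu : ∀ u : unitI, K u = Nmap f (hgood u) := by
    intro u
    ext x
    rfl
  have hvc0 : vc 0 = a := by
    simp [hvc]
  have hvc1 : vc 1 = b := by
    simp [hvc]
  have hsrc : K 0 = Nmap f ha := (hKu 0).trans (Nmap_congr f hvc0 (hgood 0) ha)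
  have htgt : K 1 = Nmap f hb := (hKu 1).trans (Nmap_congr f hvc1 (hgood 1) hb)
  refine ⟨⟨⟨fun u => K u, K.continuous⟩, hsrc, htgt⟩, ?_⟩
  intro t
  show K t ∈ Clambda
  rw [hKu t]
  exact Nmap_mem_Clambda f (hgood t)

/-- Every element of `Clambda` is joined to the identity within `Clambda`. -/
lemma joined_to_id (hf : f ∈ Clambda) :
    JoinedIn Clambda f (ContinuousMap.id unitI) := by
  obtain ⟨s, hs⟩ := exists_good_s f hf
  have hW : Good f ((1:ℝ), s, s^2) := by
    have := seg1_good f hf hs 1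
    simpa using this
  have hJ1 : JoinedIn Clambda (Nmap f (good_e₁ f hf)) (Nmap f hW) :=
    joined_seg f (fun u => seg1_good f hf hs u) (good_e₁ f hf) hW
  have hJ2 : JoinedIn Clambda (Nmap f hW) (Nmap f (good_e₂ f)) :=
    joined_seg f (fun u => seg2_good f hf hs u) hW (good_e₂ f)
  have hJ := hJ1.trans hJ2
  rwa [Nmap_e₁ f hf, Nmap_e₂ f] at hJ

end WithF
end CLP


/-- The space `C_λ` (with the uniform metric) is arcwise connected: any two maps
`f, g ∈ C_λ` are joined by a path lying entirely in `C_λ`. -/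
theorem Clambda_arcwise_connected :
    ∀ f ∈ Clambda, ∀ g ∈ Clambda, JoinedIn Clambda f g := by
  intro f hf g hg
  exact (CLP.joined_to_id f hf).trans (CLP.joined_to_id g hg).symm
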